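/- Let G be a group, let a be an integer, let ε, ε₁, ε₂ ∈ {1, −1}, and let t₁, t₂, t₃ ∈ G satisfy t₁t₂t₁⁻¹ = t₃^a t₂^ε, t₁t₃t₁⁻¹ = t₃^{ε₁}, and t₂t₃t₂⁻¹ = t₃^{ε₂}. Assume t₃ has infinite order. Then t₁² and t₂² commute if and only if (ε+ε₁)(ε₂+1)a = 0. -/

import Mathlib

/-- If `t₁t₂t₁⁻¹ = t₃^a t₂^ε`, `t₁t₃t₁⁻¹ = t₃^{ε₁}`, `t₂t₃t₂⁻¹ = t₃^{ε₂}` with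
`ε, ε₁, ε₂ ∈ {1, −1}` and `t₃` of infinite order, then `t₁²` and `t₂²` commute
iff `(ε+ε₁)(ε₂+1)a = 0`. -/
theorem sq_commute_iff (G : Type*) [Group G] (a ε ε₁ ε₂ : ℤ)
    (hε : ε = 1 ∨ ε = -1) (hε₁ : ε₁ = 1 ∨ ε₁ = -1) (hε₂ : ε₂ = 1 ∨ ε₂ = -1)
    (t₁ t₂ t₃ : G)
    (h1 : t₁ * t₂ * t₁⁻¹ = t₃ ^ a * t₂ ^ ε)
    (h2 : t₁ * t₃ * t₁⁻¹ = t₃ ^ ε₁)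
    (h3 : t₂ * t₃ * t₂⁻¹ = t₃ ^ ε₂)
    (ht₃ : ¬ IsOfFinOrder t₃) :
    t₁ ^ 2 * t₂ ^ 2 = t₂ ^ 2 * t₁ ^ 2 ↔ (ε + ε₁) * (ε₂ + 1) * a = 0 := by
  have c1 : ∀ k : ℤ, t₁ * t₃ ^ k = t₃ ^ (ε₁ * k) * t₁ := by
    intro k
    have h := conj_zpow (a := t₁) (b := t₃) (i := k)
    rw [h2, ← zpow_mul] at h
    rw [h]; simp [mul_assoc]
  have c2 : ∀ k : ℤ, t₂ * t₃ ^ k = t₃ ^ (ε₂ * k) * t₂ := by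
    intro k
    have h := conj_zpow (a := t₂) (b := t₃) (i := k)
    rw [h3, ← zpow_mul] at h
    rw [h]; simp [mul_assoc]
  have c1x : ∀ (k : ℤ) (x : G), t₁ * (t₃ ^ k * x) = t₃ ^ (ε₁ * k) * (t₁ * x) := by
    intro k x; rw [← mul_assoc, c1, mul_assoc]
  have c2x : ∀ (k : ℤ) (x : G), t₂ * (t₃ ^ k * x) = t₃ ^ (ε₂ * k) * (t₂ * x) := by
    intro k x; rw [← mul_assoc, c2, mul_assoc]
  have hε₂sq : ε₂ * ε₂ = 1 := by rcases hε₂ with h | h <;> simp [h]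
  have c2i : ∀ k : ℤ, t₂⁻¹ * t₃ ^ k = t₃ ^ (ε₂ * k) * t₂⁻¹ := by
    intro k
    apply mul_left_cancel (a := t₂)
    rw [← mul_assoc, ← mul_assoc, c2, ← mul_assoc ε₂ ε₂ k, hε₂sq, one_mul]
    simp
  have c2ix : ∀ (k : ℤ) (x : G), t₂⁻¹ * (t₃ ^ k * x) = t₃ ^ (ε₂ * k) * (t₂⁻¹ * x) := by
    intro k x; rw [← mul_assoc, c2i, mul_assoc]
  have m : ∀ (i j : ℤ) (x : G), t₃ ^ i * (t₃ ^ j * x) = t₃ ^ (i + j) * x := by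
    intro i j x; rw [← mul_assoc, ← zpow_add]
  have h1' : t₁ * t₂ = t₃ ^ a * t₂ ^ ε * t₁ := by
    rw [← h1]; simp [mul_assoc]
  have key : t₁ ^ 2 * t₂ ^ 2 = t₃ ^ ((ε + ε₁) * (ε₂ + 1) * a) * (t₂ ^ 2 * t₁ ^ 2) := by
    rcases hε with h | h <;> subst h
    · rw [zpow_one] at h1'
      have r1 : t₁ * t₂ = t₃ ^ a * (t₂ * t₁) := by rw [h1', mul_assoc]
      have r1x : ∀ x : G, t₁ * (t₂ * x) = t₃ ^ a * (t₂ * (t₁ * x)) := by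
        intro x; rw [← mul_assoc, r1]; simp [mul_assoc]
      simp only [pow_two, mul_assoc, r1, r1x, c1, c1x, c2, c2x, m]
      congr 1
      ring
    · rw [zpow_neg_one] at h1' h1
      have r1 : t₁ * t₂ = t₃ ^ a * (t₂⁻¹ * t₁) := by rw [h1', mul_assoc]
      have r1x : ∀ x : G, t₁ * (t₂ * x) = t₃ ^ a * (t₂⁻¹ * (t₁ * x)) := by
        intro x; rw [← mul_assoc, r1]; simp [mul_assoc]
      have r2 : t₁ * t₂⁻¹ = t₂ * (t₃ ^ (-a) * t₁) := by
        have h'' : t₁ * t₂⁻¹ * t₁⁻¹ = t₂ * t₃ ^ (-a) := by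
          have : (t₁ * t₂ * t₁⁻¹)⁻¹ = t₂ * t₃ ^ (-a) := by
            rw [h1, mul_inv_rev, inv_inv, zpow_neg]
          rw [← this]; simp [mul_inv_rev, mul_assoc]
        rw [mul_inv_eq_iff_eq_mul] at h''
        rw [h'', mul_assoc]
      have r2x : ∀ x : G, t₁ * (t₂⁻¹ * x) = t₂ * (t₃ ^ (-a) * (t₁ * x)) := by
        intro x; rw [← mul_assoc, r2]; simp [mul_assoc]
      simp only [pow_two, mul_assoc, r1, r1x, r2, r2x, c1, c1x, c2, c2x, c2i, c2ix, m]
      congr 1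
      rcases hε₂ with h | h <;> subst h <;> ring
  constructor
  · intro h
    have h0 : t₃ ^ ((ε + ε₁) * (ε₂ + 1) * a) = t₃ ^ (0 : ℤ) := by
      rw [zpow_zero]
      have hk := key
      rw [h] at hk
      exact mul_eq_right.mp hk.symm
    exact injective_zpow_iff_not_isOfFinOrder.mpr ht₃ h0
  · intro h
    rw [key, h, zpow_zero, one_mul]
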